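/- Let $Y_1, Y_2, \dots, Y_n$ be independent real random variables with mean zero and let $p\in[1,2]$. Then $\mathbb{E}\bigl|\sum_{i=1}^n Y_i\bigr|^p \le 2^p \sum_{i=1}^n \mathbb{E}|Y_i|^p$. -/

import Mathlib

open MeasureTheory ProbabilityTheory
open scoped NNReal ENNReal

namespace VBE3



/-- signed power: `sp α x = sign(x) * |x|^α` (with `sp α 0 = 0^α`). -/
noncomputable def sp (α x : ℝ) : ℝ := if x < 0 then -((-x) ^ α) else x ^ α

lemma sp_nonneg_eq {α x : ℝ} (hx : 0 ≤ x) : sp α x = x ^ α := by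
  simp [sp, not_lt.2 hx]

lemma sp_neg_eq {α x : ℝ} (hx : x < 0) : sp α x = -((-x) ^ α) := by
  simp [sp, hx]

lemma abs_sp (α x : ℝ) : |sp α x| = |x| ^ α := by
  rcases lt_or_ge x 0 with hx | hx
  · rw [sp_neg_eq hx, abs_neg, abs_of_nonneg (Real.rpow_nonneg (by linarith) α),
      abs_of_neg hx]
  · rw [sp_nonneg_eq hx, abs_of_nonneg (Real.rpow_nonneg hx α), abs_of_nonneg hx]

lemma measurable_sp (α : ℝ) : Measurable (sp α) := by
  unfold sp
  exact Measurable.ite (measurableSet_lt measurable_id measurable_const)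
    (by fun_prop) (by fun_prop)

lemma rpow_add_le {x y α : ℝ} (hx : 0 ≤ x) (hy : 0 ≤ y) (hα0 : 0 ≤ α) (hα1 : α ≤ 1) :
    (x + y) ^ α ≤ x ^ α + y ^ α := by
  have h := NNReal.rpow_add_le_add_rpow x.toNNReal y.toNNReal hα0 hα1
  calc (x + y) ^ α = ((x.toNNReal + y.toNNReal : ℝ≥0) : ℝ) ^ α := by
        rw [NNReal.coe_add, Real.coe_toNNReal _ hx, Real.coe_toNNReal _ hy]
    _ = (((x.toNNReal + y.toNNReal) ^ α : ℝ≥0) : ℝ) := by rw [NNReal.coe_rpow]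
    _ ≤ ((x.toNNReal ^ α + y.toNNReal ^ α : ℝ≥0) : ℝ) := NNReal.coe_le_coe.2 h
    _ = x ^ α + y ^ α := by
        rw [NNReal.coe_add, NNReal.coe_rpow, NNReal.coe_rpow,
          Real.coe_toNNReal _ hx, Real.coe_toNNReal _ hy]

lemma rpow_sub_le {x y α : ℝ} (hy : 0 ≤ y) (hxy : y ≤ x) (hα0 : 0 ≤ α) (hα1 : α ≤ 1) :
    x ^ α - y ^ α ≤ (x - y) ^ α := by
  have h := rpow_add_le (x := x - y) (y := y) (by linarith) hy hα0 hα1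
  rw [sub_add_cancel] at h
  linarith

/-- Hölder-type estimate for the signed power. -/
lemma sp_holder {α : ℝ} (hα0 : 0 ≤ α) (hα1 : α ≤ 1) (x y : ℝ) :
    |sp α x - sp α y| ≤ 2 * |x - y| ^ α := by
  have main : ∀ x y : ℝ, y ≤ x → |sp α x - sp α y| ≤ 2 * |x - y| ^ α := by
    intro x y hxy
    have habs : |x - y| = x - y := abs_of_nonneg (by linarith)
    have h2 : (0:ℝ) ≤ (x - y) ^ α := Real.rpow_nonneg (by rw [← habs]; positivity) α
    rcases le_or_gt 0 y with hy | hy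
    · -- both nonneg
      have hx : (0:ℝ) ≤ x := le_trans hy hxy
      have hmono : y ^ α ≤ x ^ α := Real.rpow_le_rpow hy hxy hα0
      rw [sp_nonneg_eq hx, sp_nonneg_eq hy, habs, abs_of_nonneg (sub_nonneg.2 hmono)]
      have h1 : x ^ α - y ^ α ≤ (x - y) ^ α := rpow_sub_le hy hxy hα0 hα1
      linarith
    · rcases lt_or_ge x 0 with hx | hx
      · -- both neg
        rw [sp_neg_eq hx, sp_neg_eq hy, habs]
        have hxy' : -x ≤ -y := by linarith
        have h1 : (-y) ^ α - (-x) ^ α ≤ (-y - -x) ^ α :=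
          rpow_sub_le (by linarith) hxy' hα0 hα1
        have h3 : (-y - -x) = x - y := by ring
        rw [h3] at h1
        have h4 : -(-x) ^ α - -(-y) ^ α = (-y) ^ α - (-x) ^ α := by ring
        have hmono : (-x) ^ α ≤ (-y) ^ α :=
          Real.rpow_le_rpow (by linarith) hxy' hα0
        rw [h4, abs_of_nonneg (sub_nonneg.2 hmono)]
        linarith
      · -- y < 0 ≤ x
        rw [sp_nonneg_eq hx, sp_neg_eq hy, habs, sub_neg_eq_add]
        have hxa : x ^ α ≤ (x - y) ^ α := Real.rpow_le_rpow hx (by linarith) hα0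
        have hya : (-y) ^ α ≤ (x - y) ^ α :=
          Real.rpow_le_rpow (by linarith) (by linarith) hα0
        have hxan : (0:ℝ) ≤ x ^ α := Real.rpow_nonneg hx α
        have hyan : (0:ℝ) ≤ (-y) ^ α := Real.rpow_nonneg (by linarith) α
        rw [abs_of_nonneg (by linarith)]
        linarith
  rcases le_total y x with h | h
  · exact main x y h
  · have := main y x h
    rw [abs_sub_comm (sp α x) (sp α y), abs_sub_comm x y]
    exact this

/-- Continuity of `sp α` for `0 < α`. -/
lemma continuous_sp {α : ℝ} (hα0 : 0 < α) (hα1 : α ≤ 1) : Continuous (sp α) := by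
  rw [continuous_iff_continuousAt]
  intro y
  rw [ContinuousAt, ← tendsto_sub_nhds_zero_iff]
  apply squeeze_zero_norm (a := fun x => 2 * |x - y| ^ α)
  · intro x
    exact sp_holder hα0.le hα1 x y
  · have h1 : Filter.Tendsto (fun x : ℝ => |x - y|) (nhds y) (nhds 0) := by
      have h0 : Filter.Tendsto (fun x : ℝ => x - y) (nhds y) (nhds (y - y)) :=
        (continuous_id.sub continuous_const).tendsto y
      rw [sub_self] at h0
      simpa using h0.abs
    have h2 : Filter.Tendsto (fun t : ℝ => t ^ α) (nhds 0) (nhds 0) := by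
      have := Real.continuousAt_rpow_const 0 α (Or.inr hα0.le)
      rw [ContinuousAt, Real.zero_rpow hα0.ne'] at this
      exact this
    have := (h2.comp h1).const_mul 2
    simpa using this

/-- Derivative of `|x|^p` for `p > 1`. -/
lemma hasDerivAt_abs_rpow {p : ℝ} (hp : 1 < p) (x : ℝ) :
    HasDerivAt (fun y : ℝ => |y| ^ p) (p * sp (p - 1) x) x := by
  rcases lt_trichotomy x 0 with hx | hx | hx
  · -- x < 0
    have h : HasDerivAt (fun y : ℝ => (-y) ^ p) (p * (-x) ^ (p - 1) * (-1)) x := by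
      have hinner : HasDerivAt (fun y : ℝ => -y) (-1) x := (hasDerivAt_id x).neg
      exact (Real.hasDerivAt_rpow_const (p := p) (Or.inl (by linarith))).comp x hinner
    have heq : (fun y : ℝ => |y| ^ p) =ᶠ[nhds x] (fun y : ℝ => (-y) ^ p) := by
      filter_upwards [IsOpen.mem_nhds isOpen_Iio hx] with y hy
      rw [abs_of_neg hy]
    have := h.congr_of_eventuallyEq heq
    refine this.congr_deriv ?_
    rw [sp_neg_eq hx]; ring
  · -- x = 0
    subst hx
    have hkey : ∀ y : ℝ, y ≠ 0 → ‖slope (fun y : ℝ => |y| ^ p) 0 y‖ = |y| ^ (p - 1) := by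
      intro y hy
      rw [slope_def_field]
      have h0 : |(0:ℝ)| ^ p = 0 := by
        rw [abs_zero, Real.zero_rpow (by linarith)]
      rw [h0, sub_zero, sub_zero, Real.norm_eq_abs, abs_div,
        abs_of_nonneg (Real.rpow_nonneg (abs_nonneg y) p), Real.rpow_sub (abs_pos.2 hy), Real.rpow_one]
    rw [hasDerivAt_iff_tendsto_slope]
    have hz : sp (p - 1) 0 = 0 := by
      rw [sp_nonneg_eq le_rfl, Real.zero_rpow (by linarith)]
    rw [hz, mul_zero]
    apply squeeze_zero_norm' (a := fun y : ℝ => |y| ^ (p - 1))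
    · filter_upwards [self_mem_nhdsWithin] with y hy
      exact (hkey y hy).le
    · have h2 : Filter.Tendsto (fun t : ℝ => t ^ (p-1)) (nhds 0) (nhds 0) := by
        have := Real.continuousAt_rpow_const 0 (p-1) (Or.inr (by linarith))
        rw [ContinuousAt, Real.zero_rpow (by linarith : p - 1 ≠ 0)] at this
        exact this
      have h1 : Filter.Tendsto (fun y : ℝ => |y|) (nhdsWithin 0 {0}ᶜ) (nhds 0) := by
        have : Filter.Tendsto (fun y : ℝ => |y|) (nhds 0) (nhds 0) := by
          have h := (continuous_abs : Continuous fun y : ℝ => |y|).tendsto 0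
          rwa [abs_zero] at h
        exact this.mono_left nhdsWithin_le_nhds
      exact h2.comp h1
  · -- 0 < x
    have h : HasDerivAt (fun y : ℝ => y ^ p) (p * x ^ (p - 1)) x :=
      Real.hasDerivAt_rpow_const (p := p) (Or.inl (by linarith))
    have heq : (fun y : ℝ => |y| ^ p) =ᶠ[nhds x] (fun y : ℝ => y ^ p) := by
      filter_upwards [IsOpen.mem_nhds isOpen_Ioi hx] with y hy
      rw [abs_of_pos hy]
    have := h.congr_of_eventuallyEq heq
    refine this.congr_deriv ?_
    rw [sp_nonneg_eq hx.le]



/-- Key pointwise inequality. -/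
lemma key {p : ℝ} (hp1 : 1 ≤ p) (hp2 : p ≤ 2) (a b : ℝ) :
    |a + b| ^ p ≤ |a| ^ p + p * sp (p - 1) a * b + 2 * |b| ^ p := by
  rcases eq_or_lt_of_le hp1 with hp | hp
  · -- p = 1
    subst hp
    have h1 : |sp (1 - 1 : ℝ) a| = 1 := by
      norm_num [abs_sp, Real.rpow_zero]
    have h2 : -|b| ≤ sp (1 - 1 : ℝ) a * b := by
      have := neg_abs_le (sp (1 - 1 : ℝ) a * b)
      rw [abs_mul, h1, one_mul] at this
      exact this
    have h3 := abs_add_le a b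
    rw [Real.rpow_one, Real.rpow_one, Real.rpow_one, one_mul]
    linarith
  · -- 1 < p
    set α := p - 1 with hα_def
    have hα0 : 0 < α := by simp [hα_def]; linarith
    have hα1 : α ≤ 1 := by simp [hα_def]; linarith
    by_cases hb : b = 0
    · subst hb
      simp [Real.zero_rpow (by linarith : p ≠ 0)]
    have hbpos : 0 < |b| := abs_pos.2 hb
    set F : ℝ → ℝ := fun t => |a + t * b| ^ p with hF_def
    have hF : ∀ t ∈ Set.uIcc (0:ℝ) 1, HasDerivAt F (p * sp α (a + t * b) * b) t := by
      intro t _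
      have hin : HasDerivAt (fun t : ℝ => a + t * b) b t := by
        simpa using ((hasDerivAt_id t).mul_const b).const_add a
      have := (hasDerivAt_abs_rpow hp (a + t * b)).comp t hin
      exact this
    have hcont : Continuous fun t : ℝ => p * sp α (a + t * b) * b :=
      ((continuous_const.mul ((continuous_sp hα0 hα1).comp
        (continuous_const.add (continuous_id.mul continuous_const)))).mul continuous_const)
    have hFTC : ∫ t in (0:ℝ)..1, p * sp α (a + t * b) * b = |a + b| ^ p - |a| ^ p := by
      have := intervalIntegral.integral_eq_sub_of_hasDerivAt hF
        (hcont.intervalIntegrable 0 1)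
      simpa [hF_def] using this
    have hconst : ∫ t in (0:ℝ)..1, p * sp α a * b = p * sp α a * b := by simp
    have hI1 : IntervalIntegrable (fun t : ℝ => p * sp α (a + t * b) * b) volume 0 1 :=
      hcont.intervalIntegrable 0 1
    have hI2 : IntervalIntegrable (fun _ : ℝ => p * sp α a * b) volume 0 1 :=
      intervalIntegrable_const
    have hI3 : IntervalIntegrable (fun t : ℝ => 2 * p * |b| ^ p * t ^ α) volume 0 1 := by
      apply ContinuousOn.intervalIntegrable
      apply ContinuousOn.mul continuousOn_const
      intro t ht
      exact ((Real.continuousAt_rpow_const t α (Or.inr hα0.le)).continuousWithinAt)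
    have hbound : ∀ t ∈ Set.Icc (0:ℝ) 1,
        p * sp α (a + t * b) * b - p * sp α a * b ≤ 2 * p * |b| ^ p * t ^ α := by
      intro t ht
      have h1 : p * sp α (a + t * b) * b - p * sp α a * b
          = p * ((sp α (a + t * b) - sp α a) * b) := by ring
      have h2 : (sp α (a + t * b) - sp α a) * b ≤ |sp α (a + t * b) - sp α a| * |b| := by
        calc (sp α (a + t * b) - sp α a) * b ≤ |(sp α (a + t * b) - sp α a) * b| := le_abs_self _
          _ = |sp α (a + t * b) - sp α a| * |b| := abs_mul _ _
      have h3 : |sp α (a + t * b) - sp α a| ≤ 2 * (t ^ α * |b| ^ α) := by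
        have := sp_holder hα0.le hα1 (a + t * b) a
        have he : |a + t * b - a| = t * |b| := by
          rw [show a + t * b - a = t * b by ring, abs_mul, abs_of_nonneg ht.1]
        rw [he, Real.mul_rpow ht.1 (abs_nonneg b)] at this
        exact this
      have h4 : |b| ^ α * |b| = |b| ^ p := by
        nth_rewrite 2 [show |b| = |b| ^ (1:ℝ) by rw [Real.rpow_one]]
        rw [← Real.rpow_add hbpos]
        norm_num [hα_def]
      calc p * sp α (a + t * b) * b - p * sp α a * b
          = p * ((sp α (a + t * b) - sp α a) * b) := h1
        _ ≤ p * (|sp α (a + t * b) - sp α a| * |b|) :=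
            mul_le_mul_of_nonneg_left h2 (by linarith)
        _ ≤ p * ((2 * (t ^ α * |b| ^ α)) * |b|) := by
            apply mul_le_mul_of_nonneg_left _ (by linarith)
            exact mul_le_mul_of_nonneg_right h3 (abs_nonneg b)
        _ = 2 * p * (|b| ^ α * |b|) * t ^ α := by ring
        _ = 2 * p * |b| ^ p * t ^ α := by rw [h4]
    have hrpow_int : ∫ t in (0:ℝ)..1, t ^ α = 1 / p := by
      rw [integral_rpow (Or.inl (by linarith : (-1:ℝ) < α))]
      rw [Real.one_rpow, Real.zero_rpow (by linarith : α + 1 ≠ 0)]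
      norm_num [hα_def]
    have hmono := intervalIntegral.integral_mono_on (by norm_num : (0:ℝ) ≤ 1)
      (hI1.sub hI2) hI3 (by
        intro t ht
        have := hbound t ht
        simpa using this)
    rw [intervalIntegral.integral_sub hI1 hI2, hFTC, hconst] at hmono
    have hRHS : ∫ t in (0:ℝ)..1, 2 * p * |b| ^ p * t ^ α = 2 * |b| ^ p := by
      rw [intervalIntegral.integral_const_mul, hrpow_int]
      field_simp
    rw [hRHS] at hmono
    linarith


lemma step {Ω : Type*} [MeasurableSpace Ω] (P : Measure Ω) [IsProbabilityMeasure P]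
    {p : ℝ} (hp1 : 1 ≤ p) (hp2 : p ≤ 2) {X Y : Ω → ℝ}
    (hXm : Measurable X) (hYm : Measurable Y) (hXY : IndepFun X Y P)
    (hXp : MemLp X (ENNReal.ofReal p) P) (hYp : MemLp Y (ENNReal.ofReal p) P)
    (hmY : ∫ ω, Y ω ∂P = 0) :
    ∫ ω, |X ω + Y ω| ^ p ∂P ≤ ∫ ω, |X ω| ^ p ∂P + 2 * ∫ ω, |Y ω| ^ p ∂P := by
  have hp0 : 0 < p := by linarith
  have hq1 : 1 ≤ ENNReal.ofReal p := ENNReal.one_le_ofReal.2 hp1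
  have hqne0 : ENNReal.ofReal p ≠ 0 := by
    simp [ENNReal.ofReal_eq_zero]; linarith
  have hqnetop : ENNReal.ofReal p ≠ ⊤ := ENNReal.ofReal_ne_top
  have htoReal : (ENNReal.ofReal p).toReal = p := ENNReal.toReal_ofReal hp0.le
  have IXY : Integrable (fun ω => |X ω + Y ω| ^ p) P := by
    have := (hXp.add hYp).integrable_norm_rpow hqne0 hqnetop
    simpa [htoReal, Real.norm_eq_abs] using this
  have IX : Integrable (fun ω => |X ω| ^ p) P := by
    have := hXp.integrable_norm_rpow hqne0 hqnetop
    simpa [htoReal, Real.norm_eq_abs] using this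
  have IY : Integrable (fun ω => |Y ω| ^ p) P := by
    have := hYp.integrable_norm_rpow hqne0 hqnetop
    simpa [htoReal, Real.norm_eq_abs] using this
  have IS : Integrable (fun ω => sp (p - 1) (X ω)) P := by
    apply Integrable.mono' ((integrable_const (1:ℝ)).add IX)
      (((measurable_sp (p - 1)).comp hXm).aestronglyMeasurable)
    apply ae_of_all
    intro ω
    simp only [Function.comp_apply, Pi.add_apply]
    rw [Real.norm_eq_abs, abs_sp]
    rcases le_or_gt (|X ω|) 1 with h | h
    · have h1 : |X ω| ^ (p - 1) ≤ 1 := Real.rpow_le_one (abs_nonneg _) h (by linarith)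
      have h2 : (0:ℝ) ≤ |X ω| ^ p := Real.rpow_nonneg (abs_nonneg _) p
      linarith
    · have h1 : |X ω| ^ (p - 1) ≤ |X ω| ^ p :=
        Real.rpow_le_rpow_of_exponent_le h.le (by linarith)
      linarith
  have IYint : Integrable Y P := hYp.integrable hq1
  have Iindep : IndepFun (fun ω => sp (p - 1) (X ω)) Y P := by
    have := hXY.comp (measurable_sp (p - 1)) measurable_id
    exact this
  have Iprod : Integrable (fun ω => sp (p - 1) (X ω) * Y ω) P := by
    have := Iindep.integrable_mul IS IYint
    exact this
  have Ezero : ∫ ω, sp (p - 1) (X ω) * Y ω ∂P = 0 := by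
    have h := Iindep.integral_mul_eq_mul_integral IS.1 IYint.1
    have h2 : ∫ ω, sp (p - 1) (X ω) * Y ω ∂P
        = (∫ ω, sp (p - 1) (X ω) ∂P) * ∫ ω, Y ω ∂P := h
    rw [h2, hmY, mul_zero]
  have hpt : ∀ ω, |X ω + Y ω| ^ p
      ≤ |X ω| ^ p + p * sp (p - 1) (X ω) * Y ω + 2 * |Y ω| ^ p :=
    fun ω => key hp1 hp2 (X ω) (Y ω)
  have hRHSint : Integrable
      (fun ω => |X ω| ^ p + p * sp (p - 1) (X ω) * Y ω + 2 * |Y ω| ^ p) P := by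
    apply Integrable.add
    · apply Integrable.add IX
      have : (fun ω => p * sp (p - 1) (X ω) * Y ω)
          = fun ω => p * (sp (p - 1) (X ω) * Y ω) := by funext ω; ring
      rw [this]
      exact Iprod.const_mul p
    · exact IY.const_mul 2
  have hmono := integral_mono IXY hRHSint (fun ω => hpt ω)
  have hsplit : ∫ ω, (|X ω| ^ p + p * sp (p - 1) (X ω) * Y ω + 2 * |Y ω| ^ p) ∂P
      = ∫ ω, |X ω| ^ p ∂P + p * (∫ ω, sp (p - 1) (X ω) * Y ω ∂P)
        + 2 * ∫ ω, |Y ω| ^ p ∂P := by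
    have e1 : (fun ω => |X ω| ^ p + p * sp (p - 1) (X ω) * Y ω + 2 * |Y ω| ^ p)
        = fun ω => (|X ω| ^ p + p * (sp (p - 1) (X ω) * Y ω)) + 2 * |Y ω| ^ p := by
      funext ω; ring
    have Ic : Integrable (fun ω => p * (sp (p - 1) (X ω) * Y ω)) P := Iprod.const_mul p
    have Iadd : Integrable (fun ω => |X ω| ^ p + p * (sp (p - 1) (X ω) * Y ω)) P :=
      IX.add Ic
    have I2 : Integrable (fun ω => 2 * |Y ω| ^ p) P := IY.const_mul 2
    rw [e1, integral_add Iadd I2, integral_add IX Ic, integral_const_mul,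
      integral_const_mul]
  rw [hsplit, Ezero, mul_zero, add_zero] at hmono
  exact hmono


lemma main {Ω : Type*} [MeasurableSpace Ω] (P : Measure Ω) [IsProbabilityMeasure P]
    {ι : Type*} {Y : ι → Ω → ℝ}
    (hmeas : ∀ i, Measurable (Y i)) (hindep : iIndepFun Y P)
    {p : ℝ} (hp1 : 1 ≤ p) (hp2 : p ≤ 2)
    (hmem : ∀ i, MemLp (Y i) (ENNReal.ofReal p) P)
    (hmean : ∀ i, ∫ ω, Y i ω ∂P = 0) (s : Finset ι) :
    ∫ ω, |∑ i ∈ s, Y i ω| ^ p ∂P ≤ 2 * ∑ i ∈ s, ∫ ω, |Y i ω| ^ p ∂P := by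
  classical
  induction s using Finset.induction_on with
  | empty => simp [Real.zero_rpow (by linarith : p ≠ 0)]
  | @insert i s hi ih =>
    have hXm : Measurable (fun ω => ∑ j ∈ s, Y j ω) := by
      apply Finset.measurable_sum
      exact fun j _ => hmeas j
    have hXp : MemLp (fun ω => ∑ j ∈ s, Y j ω) (ENNReal.ofReal p) P :=
      memLp_finset_sum s (fun j _ => hmem j)
    have hXY : IndepFun (fun ω => ∑ j ∈ s, Y j ω) (Y i) P := by
      have := hindep.indepFun_finsetSum_of_notMem hmeas hi
      have he : (∑ j ∈ s, Y j) = fun ω => ∑ j ∈ s, Y j ω := by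
        funext ω; simp [Finset.sum_apply]
      rwa [he] at this
    have hstep := step P hp1 hp2 hXm (hmeas i) hXY hXp (hmem i) (hmean i)
    have hrw : ∫ ω, |∑ j ∈ insert i s, Y j ω| ^ p ∂P
        = ∫ ω, |(∑ j ∈ s, Y j ω) + Y i ω| ^ p ∂P := by
      apply integral_congr_ae
      apply ae_of_all
      intro ω
      show |∑ j ∈ insert i s, Y j ω| ^ p = |(∑ j ∈ s, Y j ω) + Y i ω| ^ p
      rw [Finset.sum_insert hi, add_comm]
    rw [hrw, Finset.sum_insert hi]
    have hnn : (0:ℝ) ≤ ∫ ω, |Y i ω| ^ p ∂P :=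
      integral_nonneg fun ω => Real.rpow_nonneg (abs_nonneg _) p
    calc ∫ ω, |(∑ j ∈ s, Y j ω) + Y i ω| ^ p ∂P
        ≤ ∫ ω, |∑ j ∈ s, Y j ω| ^ p ∂P + 2 * ∫ ω, |Y i ω| ^ p ∂P := hstep
      _ ≤ 2 * ∑ j ∈ s, ∫ ω, |Y j ω| ^ p ∂P + 2 * ∫ ω, |Y i ω| ^ p ∂P := by linarith
      _ = 2 * (∫ ω, |Y i ω| ^ p ∂P + ∑ j ∈ s, ∫ ω, |Y j ω| ^ p ∂P) := by ring

lemma indep_ae_eq {Ω : Type*} [MeasurableSpace Ω] {P : Measure Ω}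
    {ι : Type*} {f g : ι → Ω → ℝ}
    (hf : iIndepFun f P) (h : ∀ i, f i =ᵐ[P] g i) :
    iIndepFun g P := by
  rw [iIndepFun_iff_measure_inter_preimage_eq_mul] at hf ⊢
  intro S sets H
  have hsets : ∀ i : ι, (f i ⁻¹' sets i : Set Ω) =ᵐ[P] (g i ⁻¹' sets i) := by
    intro i
    filter_upwards [h i] with ω hω
    change (f i ω ∈ sets i) = (g i ω ∈ sets i)
    rw [hω]
  have h1 : P (⋂ i ∈ S, g i ⁻¹' sets i) = P (⋂ i ∈ S, f i ⁻¹' sets i) := by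
    apply measure_congr
    have hall : ∀ᵐ ω ∂P, ∀ i ∈ (S : Set ι), f i ω = g i ω :=
      (ae_ball_iff S.countable_toSet).2 fun i _ => h i
    filter_upwards [hall] with ω hω
    change (ω ∈ ⋂ i ∈ S, g i ⁻¹' sets i) = (ω ∈ ⋂ i ∈ S, f i ⁻¹' sets i)
    simp only [Set.mem_iInter, Set.mem_preimage, eq_iff_iff]
    constructor <;> intro hh j hj
    · rw [hω j (Finset.mem_coe.2 hj)]; exact hh j hj
    · rw [← hω j (Finset.mem_coe.2 hj)]; exact hh j hj
  rw [h1, hf S H]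
  exact Finset.prod_congr rfl fun i _ => measure_congr (hsets i)


end VBE3

open VBE3 in
theorem stmt3 {Ω : Type*} [MeasurableSpace Ω] (P : Measure Ω) [IsProbabilityMeasure P]
    (n : ℕ) (Y : Fin n → Ω → ℝ)
    (hindep : iIndepFun Y P)
    (p : ℝ) (hp1 : 1 ≤ p) (hp2 : p ≤ 2)
    (hmem : ∀ i, MemLp (Y i) (ENNReal.ofReal p) P)
    (hmean : ∀ i, ∫ ω, Y i ω ∂P = 0) :
    ∫ ω, |∑ i, Y i ω| ^ p ∂P ≤ 2 ^ p * ∑ i, ∫ ω, |Y i ω| ^ p ∂P := by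
  -- replace `Y` by measurable representatives
  set Z : Fin n → Ω → ℝ := fun i => ((hmem i).aestronglyMeasurable).mk (Y i) with hZ
  have hZmeas : ∀ i, Measurable (Z i) := fun i =>
    ((hmem i).aestronglyMeasurable).stronglyMeasurable_mk.measurable
  have hZe : ∀ i, Y i =ᵐ[P] Z i := fun i => ((hmem i).aestronglyMeasurable).ae_eq_mk
  have hZindep : iIndepFun Z P := indep_ae_eq hindep hZe
  have hZmem : ∀ i, MemLp (Z i) (ENNReal.ofReal p) P := fun i => (hmem i).ae_eq (hZe i)
  have hZmean : ∀ i, ∫ ω, Z i ω ∂P = 0 := fun i => by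
    rw [← integral_congr_ae (hZe i)]; exact hmean i
  have hmain := main P hZmeas hZindep hp1 hp2 hZmem hZmean Finset.univ
  have hL : ∫ ω, |∑ i, Y i ω| ^ p ∂P = ∫ ω, |∑ i, Z i ω| ^ p ∂P := by
    apply integral_congr_ae
    have hall : ∀ᵐ ω ∂P, ∀ i, Y i ω = Z i ω := ae_all_iff.2 hZe
    filter_upwards [hall] with ω hω
    rw [Finset.sum_congr rfl fun i _ => hω i]
  have hR : ∀ i, ∫ ω, |Y i ω| ^ p ∂P = ∫ ω, |Z i ω| ^ p ∂P := fun i => by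
    apply integral_congr_ae
    filter_upwards [hZe i] with ω hω
    rw [hω]
  rw [hL]
  calc ∫ ω, |∑ i, Z i ω| ^ p ∂P ≤ 2 * ∑ i, ∫ ω, |Z i ω| ^ p ∂P := hmain
    _ ≤ 2 ^ p * ∑ i, ∫ ω, |Z i ω| ^ p ∂P := by
        apply mul_le_mul_of_nonneg_right
        · calc (2:ℝ) = 2 ^ (1:ℝ) := (Real.rpow_one 2).symm
            _ ≤ 2 ^ p := Real.rpow_le_rpow_of_exponent_le one_le_two hp1
        · exact Finset.sum_nonneg fun i _ =>
            integral_nonneg fun ω => Real.rpow_nonneg (abs_nonneg _) p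
    _ = 2 ^ p * ∑ i, ∫ ω, |Y i ω| ^ p ∂P := by
        congr 1
        exact (Finset.sum_congr rfl fun i _ => (hR i).symm)
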